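/- Let p ∈ (0,1] and let g_p: [1/2,∞) → [0,1) be the inverse of f_p, where f_p(s) = (1/2) Σ_{n≥0} s^n/(1+pn). Then g_p is differentiable on (1/2,∞) and satisfies the differential equation g_p'(t) = 2p·g_p(t)·(1-g_p(t)) / (1 - 2t(1-g_p(t))) for all t > 1/2, with g_p(1/2) = 0. -/

import Mathlib

open Real Set

set_option maxHeartbeats 1000000

/-- Let `p ∈ (0,1]` and let `g` be the inverse on `[1/2,∞)` of
`f_p(s) = (1/2) Σ_{n≥0} s^n/(1+pn)` (which may be assumed to be a strictly increasing
bijection from `[0,1)` onto `[1/2,∞)`). Then `g(1/2) = 0` and `g` is differentiable on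
`(1/2,∞)` with `g'(t) = 2p g(t)(1-g(t))/(1 - 2t(1-g(t)))`. -/
theorem gel_mass_ODE (p : ℝ) (hp : p ∈ Set.Ioc (0:ℝ) 1)
    (f : ℝ → ℝ) (hf : f = fun s : ℝ => (1/2) * ∑' n : ℕ, s ^ n / (1 + p * n))
    (hmono : StrictMonoOn f (Set.Ico (0:ℝ) 1))
    (hbij : Set.BijOn f (Set.Ico (0:ℝ) 1) (Set.Ici (1/2 : ℝ)))
    (g : ℝ → ℝ)
    (hgmem : ∀ t ∈ Set.Ici (1/2 : ℝ), g t ∈ Set.Ico (0:ℝ) 1)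
    (hginv : ∀ t ∈ Set.Ici (1/2 : ℝ), f (g t) = t) :
    g (1/2) = 0 ∧
      ∀ t > (1/2 : ℝ),
        HasDerivAt g (2 * p * g t * (1 - g t) / (1 - 2 * t * (1 - g t))) t := by
  obtain ⟨hp0, hp1⟩ := hp
  have hden : ∀ n : ℕ, (0:ℝ) < 1 + p * n := fun n => by positivity
  have hsum : ∀ s : ℝ, s ∈ Set.Ico (0:ℝ) 1 → Summable (fun n : ℕ => s ^ n / (1 + p * n)) := by
    intro s hs
    refine Summable.of_nonneg_of_le
      (fun n => div_nonneg (pow_nonneg hs.1 n) (hden n).le) (fun n => ?_)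
      (summable_geometric_of_lt_one hs.1 hs.2)
    exact div_le_self (pow_nonneg hs.1 n) (by nlinarith [hden n, mul_nonneg hp0.le (Nat.cast_nonneg (α := ℝ) n)])
  have hf0 : f 0 = 1/2 := by
    rw [hf]
    simp only
    rw [tsum_eq_single 0 (fun n hn => by simp [zero_pow hn])]
    norm_num
  -- strict inequality: tsum < (1-s)⁻¹ for s ∈ (0,1)
  have hlt : ∀ s : ℝ, s ∈ Set.Ioo (0:ℝ) 1 → (∑' n : ℕ, s ^ n / (1 + p * n)) < (1 - s)⁻¹ := by
    intro s hs
    rw [← tsum_geometric_of_lt_one hs.1.le hs.2]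
    refine Summable.tsum_lt_tsum_of_nonneg
      (fun n => div_nonneg (pow_nonneg hs.1.le n) (hden n).le)
      (fun n => div_le_self (pow_nonneg hs.1.le n)
        (by nlinarith [mul_nonneg hp0.le (Nat.cast_nonneg (α := ℝ) n)])) (i := 1) ?_
      (summable_geometric_of_lt_one hs.1.le hs.2)
    simp only [pow_one, Nat.cast_one, mul_one]
    exact div_lt_self hs.1 (by linarith)
  -- derivative of f on (0,1)
  have key : ∀ s : ℝ, s ∈ Set.Ioo (0:ℝ) 1 →
      HasDerivAt f ((1 - 2 * f s * (1 - s)) / (2 * p * s * (1 - s))) s := by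
    intro s hs
    obtain ⟨hs0, hs1⟩ := hs
    set r : ℝ := (1 + s)/2 with hr
    have hr1 : r < 1 := by rw [hr]; linarith
    have hrpos : 0 < r := by rw [hr]; linarith
    have hsr : s < r := by rw [hr]; linarith
    have hu : Summable (fun n : ℕ => (n:ℝ) * r ^ (n-1)) := by
      have h := (summable_pow_mul_geometric_of_norm_lt_one 1
        (r := r) (by rw [Real.norm_eq_abs, abs_of_pos hrpos]; exact hr1)).mul_left r⁻¹
      refine h.congr fun n => ?_
      cases n with
      | zero => simp
      | succ m =>
        simp only [pow_one, pow_succ, Nat.add_sub_cancel]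
        field_simp
    have hFd : HasDerivAt (fun z : ℝ => ∑' n : ℕ, z ^ n / (1 + p * n))
        (∑' n : ℕ, (n:ℝ) * s ^ (n-1) / (1 + p * n)) s := by
      refine hasDerivAt_tsum_of_isPreconnected hu (isOpen_Ioo (a := -r) (b := r))
        (convex_Ioo _ _).isPreconnected
        (fun n y _ => (hasDerivAt_pow n y).div_const (1 + p * n))
        (fun n y hy => ?_) (show s ∈ Set.Ioo (-r) r from ⟨by linarith, hsr⟩)
        (hsum s ⟨hs0.le, hs1⟩) (show s ∈ Set.Ioo (-r) r from ⟨by linarith, hsr⟩)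
      have hyr : |y| ≤ r := le_of_lt (abs_lt.2 ⟨hy.1, hy.2⟩)
      rw [Real.norm_eq_abs]
      calc |(n:ℝ) * y ^ (n-1) / (1 + p * n)|
          ≤ |(n:ℝ) * y ^ (n-1)| := by
            rw [abs_div, abs_of_pos (hden n)]
            exact div_le_self (abs_nonneg _) (by nlinarith [mul_nonneg hp0.le (Nat.cast_nonneg (α := ℝ) n)])
        _ = (n:ℝ) * |y| ^ (n-1) := by rw [abs_mul, abs_pow, Nat.abs_cast]
        _ ≤ (n:ℝ) * r ^ (n-1) := by
            exact mul_le_mul_of_nonneg_left (pow_le_pow_left₀ (abs_nonneg _) hyr _) (Nat.cast_nonneg n)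
    have hfd : HasDerivAt f ((1/2) * ∑' n : ℕ, (n:ℝ) * s ^ (n-1) / (1 + p * n)) s := by
      rw [hf]; exact hFd.const_mul (1/2)
    -- identify the derivative value
    have hgeo : Summable (fun n : ℕ => s ^ n) := summable_geometric_of_lt_one hs0.le hs1
    have hFs : Summable (fun n : ℕ => s ^ n / (1 + p * n)) := hsum s ⟨hs0.le, hs1⟩
    have htermwise : (fun n : ℕ => s * ((n:ℝ) * s ^ (n-1) / (1 + p * n)))
        = fun n : ℕ => (1/p) * (s ^ n - s ^ n / (1 + p * n)) := by
      funext n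
      have hd := (hden n).ne'
      cases n with
      | zero => simp
      | succ m =>
        simp only [Nat.add_sub_cancel]
        have : s * ((((m:ℕ)+1 : ℕ):ℝ) * s ^ m / (1 + p * ((m:ℕ)+1 : ℕ))) =
            (((m:ℕ)+1 : ℕ):ℝ) * s ^ (m+1) / (1 + p * ((m:ℕ)+1 : ℕ)) := by
          rw [pow_succ]; ring
        rw [this]
        have hd' : (1 + p * (((m:ℕ)+1 : ℕ):ℝ)) ≠ 0 := (hden (m+1)).ne'
        field_simp
        push_cast
        ring
    have hkey : s * ∑' n : ℕ, (n:ℝ) * s ^ (n-1) / (1 + p * n)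
        = (1/p) * ((1 - s)⁻¹ - ∑' n : ℕ, s ^ n / (1 + p * n)) := by
      rw [← tsum_mul_left, htermwise, tsum_mul_left, Summable.tsum_sub hgeo hFs,
        tsum_geometric_of_lt_one hs0.le hs1]
    have hfs : f s = (1/2) * ∑' n : ℕ, s ^ n / (1 + p * n) := by rw [hf]
    have heq : (1/2) * ∑' n : ℕ, (n:ℝ) * s ^ (n-1) / (1 + p * n)
        = (1 - 2 * f s * (1 - s)) / (2 * p * s * (1 - s)) := by
      have hs1' : (1:ℝ) - s ≠ 0 := by intro h; linarith
      have h5 : (1 - s) * (1 - s)⁻¹ = 1 := mul_inv_cancel₀ hs1'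
      have hkey3 : p * s * (∑' n : ℕ, (n:ℝ) * s ^ (n-1) / (1 + p * n)) * (1 - s)
          = 1 - (1 - s) * ∑' n : ℕ, s ^ n / (1 + p * n) := by
        calc p * s * (∑' n : ℕ, (n:ℝ) * s ^ (n-1) / (1 + p * n)) * (1 - s)
            = (p * (1 - s)) * (s * ∑' n : ℕ, (n:ℝ) * s ^ (n-1) / (1 + p * n)) := by ring
          _ = (p * (1 - s)) * ((1/p) * ((1 - s)⁻¹ - ∑' n : ℕ, s ^ n / (1 + p * n))) := by
              rw [hkey]
          _ = (1 - s) * (1 - s)⁻¹ - (1 - s) * ∑' n : ℕ, s ^ n / (1 + p * n) := by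
              field_simp
          _ = 1 - (1 - s) * ∑' n : ℕ, s ^ n / (1 + p * n) := by rw [h5]
      have hne : (2 * p * s * (1 - s)) ≠ 0 := by
        have : (0:ℝ) < 1 - s := by linarith
        positivity
      rw [hfs, eq_div_iff hne]
      linear_combination hkey3
    rw [← heq]
    exact hfd
  have hg12 : g (1/2) = 0 := by
    have h0mem : (0:ℝ) ∈ Set.Ico (0:ℝ) 1 := by norm_num
    refine hbij.injOn (hgmem _ (Set.mem_Ici.2 (le_refl _))) h0mem ?_
    rw [hginv _ (Set.mem_Ici.2 (le_refl _)), hf0]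
  refine ⟨hg12, ?_⟩
  intro t ht
  have htI : t ∈ Set.Ici (1/2:ℝ) := le_of_lt ht
  have hsmem := hgmem t htI
  have hts : f (g t) = t := hginv t htI
  set s := g t with hsdef
  clear_value s
  have hs0 : 0 < s := by
    rcases eq_or_lt_of_le hsmem.1 with h | h
    · exfalso
      rw [← h, hf0] at hts
      linarith
    · exact h
  have hsIoo : s ∈ Set.Ioo (0:ℝ) 1 := ⟨hs0, hsmem.2⟩
  have hfd := key s hsIoo
  rw [hts] at hfd
  have hpos : 0 < 1 - 2 * t * (1 - s) := by
    have h1 := hlt s hsIoo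
    have h2 : f s = (1/2) * ∑' n : ℕ, s ^ n / (1 + p * n) := by rw [hf]
    have h3 : f s < (1/2) * (1 - s)⁻¹ := by rw [h2]; nlinarith
    rw [hts] at h3
    have h4 : (0:ℝ) < 1 - s := by linarith [hsmem.2]
    have h5 : (1 - s) * (1 - s)⁻¹ = 1 := mul_inv_cancel₀ h4.ne'
    nlinarith
  have h1s : (0:ℝ) < 1 - s := by have := hsmem.2; linarith
  have hBpos : 0 < 2 * p * s * (1 - s) := by positivity
  have hf'pos : 0 < (1 - 2 * t * (1 - s)) / (2 * p * s * (1 - s)) := div_pos hpos hBpos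
  have hcont : ContinuousAt g t := by
    refine Metric.tendsto_nhds.2 ?_
    intro ε hε
    obtain ⟨δ, hδ0, hδε, hδs, hδ1s⟩ :
        ∃ δ : ℝ, 0 < δ ∧ δ ≤ ε/2 ∧ δ ≤ s/2 ∧ δ ≤ (1-s)/2 :=
      ⟨min (ε/2) (min (s/2) ((1-s)/2)),
        lt_min (by linarith) (lt_min (by linarith) (by linarith)),
        min_le_left _ _, le_trans (min_le_right _ _) (min_le_left _ _),
        le_trans (min_le_right _ _) (min_le_right _ _)⟩
    have haI : s - δ ∈ Set.Ico (0:ℝ) 1 :=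
      Set.mem_Ico.2 ⟨by linarith, by linarith⟩
    have hbI : s + δ ∈ Set.Ico (0:ℝ) 1 :=
      Set.mem_Ico.2 ⟨by linarith, by linarith⟩
    have hfa : f (s - δ) < t := by
      rw [← hts]; exact hmono haI ⟨hs0.le, hsmem.2⟩ (by linarith)
    have hfb : t < f (s + δ) := by
      rw [← hts]; exact hmono ⟨hs0.le, hsmem.2⟩ hbI (by linarith)
    have hfa12 : (1/2:ℝ) ≤ f (s - δ) := hbij.mapsTo haI
    filter_upwards [Ioo_mem_nhds hfa hfb] with y hy
    have hyI : y ∈ Set.Ici (1/2:ℝ) := le_of_lt (lt_of_le_of_lt hfa12 hy.1)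
    have hgy := hgmem y hyI
    have hfgy := hginv y hyI
    have h1 : s - δ < g y := by
      by_contra h
      push_neg at h
      have := hmono.monotoneOn hgy haI h
      rw [hfgy] at this
      exact absurd hy.1 (not_lt.2 this)
    have h2 : g y < s + δ := by
      by_contra h
      push_neg at h
      have := hmono.monotoneOn hbI hgy h
      rw [hfgy] at this
      exact absurd hy.2 (not_lt.2 this)
    rw [Real.dist_eq]
    have hlt2 : |g y - s| < δ := abs_lt.2 ⟨by linarith, by linarith⟩
    calc |g y - g t| = |g y - s| := by rw [← hsdef]
      _ < δ := hlt2
      _ < ε := by linarith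
  have hfd' : HasDerivAt f ((1 - 2 * t * (1 - s)) / (2 * p * s * (1 - s))) (g t) :=
    hsdef ▸ hfd
  have hres := HasDerivAt.of_local_left_inverse hcont hfd' hf'pos.ne' ?_
  · rw [inv_div] at hres
    exact hres
  · filter_upwards [Ioi_mem_nhds ht] with y hy
    exact hginv y (Set.mem_Ici.2 (le_of_lt hy))
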